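/- For all integers Δ ≥ 1, r ≥ 1 and every real Λ > 0 there exists a constant C > 0 such that the following holds for every instance of the local-potential framework whose vertex set has n ≥ 2 elements. Let ℓ be a labeling and let (S, ℓ_S) be a minimal improving set with respect to ℓ with improving ratio β = IR(S, ℓ, ℓ_S), where 0 < β ≤ 1. Then for every 0 < ε < β and every vertex v ∈ S there exist a natural number k ≤ C·(log n)/ε and a nonempty subset A ⊆ S ∩ N_k[{v}] such that, letting ℓ_A be the labeling equal to ℓ_S on A and equal to ℓ elsewhere, IR(A, ℓ, ℓ_A) ≥ β − ε. -/

import Mathlib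

open scoped Classical

/-- `withinDist G r u v` means the graph distance between `u` and `v` in `G`
is at most `r` (there is a walk of length at most `r`). -/
def withinDist {V : Type*} (G : SimpleGraph V) (r : ℕ) (u v : V) : Prop :=
  ∃ p : G.Walk u v, p.length ≤ r

/-- The improving ratio `IR(A, ℓ, ℓ') = (Pot(ℓ) − Pot(ℓ'))/|A|` if `A ≠ ∅`,
and `0` if `A = ∅`. -/
noncomputable def IR {V : Type*} [Fintype V] {L : Type*}
    (Ψ : V → (V → L) → ℝ) (A : Set V) (ℓ ℓ' : V → L) : ℝ :=
  if A = ∅ then 0 else ((∑ v, Ψ v ℓ) - ∑ v, Ψ v ℓ') / A.ncard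

lemma withinDist_refl {V : Type*} (G : SimpleGraph V) (k : ℕ) (u : V) :
    withinDist G k u u := ⟨.nil, by simp⟩

lemma withinDist_symm {V : Type*} {G : SimpleGraph V} {k : ℕ} {u v : V}
    (h : withinDist G k u v) : withinDist G k v u := by
  obtain ⟨p, hp⟩ := h
  exact ⟨p.reverse, by simpa using hp⟩

lemma withinDist_mono {V : Type*} {G : SimpleGraph V} {k k' : ℕ} (hk : k ≤ k') {u v : V}
    (h : withinDist G k u v) : withinDist G k' u v := by
  obtain ⟨p, hp⟩ := h
  exact ⟨p, hp.trans hk⟩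

lemma withinDist_trans {V : Type*} {G : SimpleGraph V} {a b : ℕ} {u w x : V}
    (h1 : withinDist G a u w) (h2 : withinDist G b w x) : withinDist G (a + b) u x := by
  obtain ⟨p, hp⟩ := h1
  obtain ⟨q, hq⟩ := h2
  exact ⟨p.append q, by rw [SimpleGraph.Walk.length_append]; omega⟩

lemma finset_biUnion_ncard {V : Type*} [Fintype V] (t : Finset V) (f : V → Set V) (m : ℕ)
    (hf : ∀ u, (f u).ncard ≤ m) : (⋃ u ∈ (t : Finset V), f u).ncard ≤ t.card * m := by
  classical
  induction t using Finset.induction with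
  | empty => simp
  | insert _ _ hx ihf =>
    rename_i a t
    rw [Finset.set_biUnion_insert, Finset.card_insert_of_notMem hx]
    calc (f a ∪ ⋃ u ∈ (t : Finset V), f u).ncard
        ≤ (f a).ncard + (⋃ u ∈ (t : Finset V), f u).ncard := Set.ncard_union_le _ _
      _ ≤ m + t.card * m := by gcongr; exact hf a
      _ = (t.card + 1) * m := by ring

lemma set_biUnion_ncard {V : Type*} [Fintype V] (F : Set V) (f : V → Set V) (m : ℕ)
    (hf : ∀ u, (f u).ncard ≤ m) : (⋃ u ∈ F, f u).ncard ≤ F.ncard * m := by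
  classical
  rw [Set.ncard_eq_toFinset_card' F,
    show (⋃ u ∈ F, f u) = ⋃ u ∈ (F.toFinset : Finset V), f u by simp]
  exact finset_biUnion_ncard _ _ _ hf

lemma ball_card {V : Type*} [Fintype V] {G : SimpleGraph V} {Δ : ℕ}
    (hΔ : ∀ v, (G.neighborSet v).ncard ≤ Δ) (s : V) (k : ℕ) :
    ({u | withinDist G k s u}).ncard ≤ (Δ + 1) ^ k := by
  induction k with
  | zero =>
    have hsub : {u | withinDist G 0 s u} ⊆ {s} := by
      rintro u ⟨p, hp⟩
      have : s = u := SimpleGraph.Walk.eq_of_length_eq_zero (Nat.le_zero.mp hp)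
      simp [this.symm, Set.mem_singleton_iff]
    calc ({u | withinDist G 0 s u}).ncard ≤ ({s} : Set V).ncard :=
          Set.ncard_le_ncard hsub (Set.toFinite _)
      _ = 1 := Set.ncard_singleton s
      _ ≤ (Δ + 1) ^ 0 := by simp
  | succ k ih =>
    have hsub : {u | withinDist G (k+1) s u} ⊆
        ⋃ w ∈ {u | withinDist G k s u}, ({w} ∪ G.neighborSet w) := by
      rintro u ⟨p, hp⟩
      rcases Nat.lt_or_ge p.length (k+1) with h | h
      · refine Set.mem_biUnion (show u ∈ {u | withinDist G k s u} from ⟨p, by omega⟩) ?_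
        simp
      · have hlen : p.reverse.length = k + 1 := by
          rw [SimpleGraph.Walk.length_reverse]; omega
        cases hrev : p.reverse with
        | nil => rw [hrev] at hlen; simp at hlen
        | @cons _ w _ hadj q =>
          have hq : q.length = k := by rw [hrev] at hlen; simpa using hlen
          refine Set.mem_biUnion (show w ∈ {u | withinDist G k s u} from
            ⟨q.reverse, by simp [hq]⟩) ?_
          right
          exact hadj.symm
    have hball : ∀ w : V, ({w} ∪ G.neighborSet w).ncard ≤ Δ + 1 := by
      intro w
      calc ({w} ∪ G.neighborSet w).ncard ≤
          ({w} : Set V).ncard + (G.neighborSet w).ncard := Set.ncard_union_le _ _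
        _ ≤ 1 + Δ := by have := hΔ w; rw [Set.ncard_singleton]; omega
        _ = Δ + 1 := by omega
    calc ({u | withinDist G (k+1) s u}).ncard
        ≤ (⋃ w ∈ {u | withinDist G k s u}, ({w} ∪ G.neighborSet w)).ncard :=
          Set.ncard_le_ncard hsub (Set.toFinite _)
      _ ≤ ({u | withinDist G k s u}).ncard * (Δ + 1) :=
          set_biUnion_ncard _ _ _ hball
      _ ≤ (Δ + 1) ^ k * (Δ + 1) := by gcongr
      _ = (Δ + 1) ^ (k + 1) := by ring

lemma half_le_log_one_add {c : ℝ} (hc0 : 0 < c) (hc1 : c ≤ 1) :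
    c / 2 ≤ Real.log (1 + c) := by
  have h1 : (0:ℝ) < 1 - c / 2 := by linarith
  have h2 : 1 - c / 2 ≤ Real.exp (-(c/2)) := by
    have := Real.add_one_le_exp (-(c/2)); linarith
  have h3 : Real.exp (c/2) ≤ 1 / (1 - c/2) := by
    rw [le_div_iff₀ h1]
    calc Real.exp (c/2) * (1 - c/2) ≤ Real.exp (c/2) * Real.exp (-(c/2)) := by
          exact mul_le_mul_of_nonneg_left h2 (Real.exp_pos _).le
      _ = 1 := by rw [← Real.exp_add]; simp
  have h4 : 1 / (1 - c/2) ≤ 1 + c := by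
    rw [div_le_iff₀ h1]; nlinarith
  have h5 : Real.exp (c/2) ≤ 1 + c := h3.trans h4
  rw [Real.le_log_iff_exp_le (by linarith)]
  exact h5


set_option maxHeartbeats 1000000 in
/-- For all `Δ, r ≥ 1` and `Λ > 0` there is a constant `C > 0` such that, in
every local-potential instance on `n ≥ 2` vertices: if `(S, ℓS)` is a minimal
improving set with improving ratio `β = IR(S, ℓ, ℓS)`, `0 < β ≤ 1`, then for
every `0 < ε < β` and every `v ∈ S`, there are `k ≤ C·(log n)/ε` and a
nonempty `A ⊆ S ∩ N_k[{v}]` such that the labeling `ℓA` equal to `ℓS` on `A`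
and to `ℓ` elsewhere satisfies `IR(A, ℓ, ℓA) ≥ β − ε`. -/
theorem imprBalls (Δ r : ℕ) (hΔ : 1 ≤ Δ) (hr : 1 ≤ r) (Λ : ℝ) (hΛ : 0 < Λ) :
    ∃ C : ℝ, 0 < C ∧
      ∀ (V : Type) [Fintype V], ∀ (G : SimpleGraph V),
        (∀ v, (G.neighborSet v).ncard ≤ Δ) →
        2 ≤ Fintype.card V →
        ∀ (L : Type) [Fintype L] [Nonempty L], ∀ (Ψ : V → (V → L) → ℝ),
          (∀ v (ℓ ℓ' : V → L),
            (∀ u, withinDist G r v u → ℓ u = ℓ' u) → Ψ v ℓ = Ψ v ℓ') →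
          (∀ v ℓ, 0 ≤ Ψ v ℓ ∧ Ψ v ℓ ≤ Λ) →
          ∀ (ℓ ℓS : V → L) (S : Set V),
            (∀ v ∉ S, ℓS v = ℓ v) →
            (∑ v, Ψ v ℓS) < (∑ v, Ψ v ℓ) →
            (¬ ∃ (A' : Set V) (ℓ' : V → L),
              A' ⊂ S ∧ (∀ v ∉ A', ℓ' v = ℓ v) ∧
              (∑ v, Ψ v ℓ') < (∑ v, Ψ v ℓ) ∧
              IR Ψ S ℓ ℓS < IR Ψ A' ℓ ℓ') →
            0 < IR Ψ S ℓ ℓS → IR Ψ S ℓ ℓS ≤ 1 →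
            ∀ ε : ℝ, 0 < ε → ε < IR Ψ S ℓ ℓS →
              ∀ v ∈ S,
                ∃ k : ℕ, (k : ℝ) ≤ C * Real.log (Fintype.card V) / ε ∧
                  ∃ A : Set V, A.Nonempty ∧
                    A ⊆ S ∩ {u | withinDist G k u v} ∧
                    IR Ψ S ℓ ℓS - ε ≤
                      IR Ψ A ℓ (fun u => if u ∈ A then ℓS u else ℓ u) := by
  classical
  set K : ℝ := ((Δ : ℝ) + 1) ^ r with hK_def
  have hK1 : 1 ≤ K := one_le_pow₀ (by
    have h : (1:ℝ) ≤ (Δ:ℝ) := by exact_mod_cast hΔ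
    linarith)
  set D : ℝ := max (3 * Λ * K) 1 with hD_def
  have hD1 : 1 ≤ D := le_max_right _ _
  have hD0 : 0 < D := lt_of_lt_of_le one_pos hD1
  have hDΛK : 3 * Λ * K ≤ D := le_max_left _ _
  refine ⟨4 * r * D + 2 * r / Real.log 2 + 1, ?_, ?_⟩
  · have hlog2 : 0 < Real.log 2 := Real.log_pos (by norm_num)
    have hr' : (1:ℝ) ≤ r := Nat.one_le_cast.mpr hr
    positivity
  intro V _ G hdeg hn L _ _ Ψ hloc hbnd ℓ ℓS S hout himp hmin hβpos hβ1 ε hε hεβ v hv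
  set β := IR Ψ S ℓ ℓS with hβ_def
  have hε1 : ε ≤ 1 := le_of_lt (lt_of_lt_of_le hεβ hβ1)
  -- basic facts about S
  have hSne : S.Nonempty := ⟨v, hv⟩
  have hSemp : S ≠ ∅ := Set.nonempty_iff_ne_empty.mp hSne
  have hScard : (0:ℝ) < S.ncard := by
    exact_mod_cast (Set.ncard_pos (Set.toFinite S)).mpr hSne
  have hsumS : (∑ w, Ψ w ℓ) - ∑ w, Ψ w ℓS = β * S.ncard := by
    rw [hβ_def, IR, if_neg hSemp, div_mul_cancel₀]
    exact ne_of_gt hScard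
  -- the balls around v intersected with S
  set Ak : ℕ → Set V := fun k => S ∩ {u | withinDist G k u v} with hAk_def
  have hvAk : ∀ k, v ∈ Ak k := fun k => ⟨hv, withinDist_refl G k v⟩
  have hAkne : ∀ k, (Ak k) ≠ ∅ := fun k => Set.nonempty_iff_ne_empty.mp ⟨v, hvAk k⟩
  have hAkcard : ∀ k, (0:ℝ) < (Ak k).ncard := by
    intro k
    exact_mod_cast (Set.ncard_pos (Set.toFinite _)).mpr ⟨v, hvAk k⟩
  have hAkmono : ∀ {k k'}, k ≤ k' → Ak k ⊆ Ak k' := by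
    intro k k' hk u hu
    exact ⟨hu.1, withinDist_mono hk hu.2⟩
  set good : ℕ → Prop := fun k => β - ε ≤
    IR Ψ (Ak k) ℓ (fun u => @ite L (u ∈ Ak k) (Classical.propDecidable _) (ℓS u) (ℓ u))
    with hgood_def
  -- main step: failure implies growth
  have hstep : ∀ k : ℕ, ¬ good k →
      ε * ((Ak k).ncard : ℝ) ≤ D * (((Ak (k + 2*r)).ncard : ℝ) - ((Ak k).ncard : ℝ)) := by
    intro k hbad
    set A := Ak k with hA_def
    set Cc := S \ A with hC_def
    set ℓA : V → L := fun u => @ite L (u ∈ A) (Classical.propDecidable _) (ℓS u) (ℓ u)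
      with hℓA_def
    set ℓC : V → L := fun u => if u ∈ Cc then ℓS u else ℓ u with hℓC_def
    have hAsub : A ⊆ S := Set.inter_subset_left
    have hAne : A ≠ ∅ := hAkne k
    have hAcard : (0:ℝ) < A.ncard := hAkcard k
    set T : Set V := {w | (∃ u1, withinDist G r w u1 ∧ u1 ∈ S ∧ u1 ∉ A) ∧
        (∃ u2, withinDist G r w u2 ∧ u2 ∈ A)} with hT_def
    -- the failed inequality
    have hbad' : IR Ψ A ℓ ℓA < β - ε := by
      simp only [hgood_def] at hbad
      push_neg at hbad
      exact hbad
    have hImpA : (∑ w, Ψ w ℓ) - ∑ w, Ψ w ℓA < (β - ε) * A.ncard := by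
      rw [IR, if_neg hAne, div_lt_iff₀ hAcard] at hbad'
      exact hbad'
    -- minimality bounds the improvement of the complement
    have hImpC : (∑ w, Ψ w ℓ) - ∑ w, Ψ w ℓC ≤ β * Cc.ncard := by
      by_cases himpC : ∑ w, Ψ w ℓC < ∑ w, Ψ w ℓ
      · have hCne : Cc ≠ ∅ := by
          intro h
          have hid : ℓC = ℓ := by
            funext u
            simp only [hℓC_def]
            rw [if_neg (by simp [h])]
          rw [hid] at himpC
          exact lt_irrefl _ himpC
        have hCcard : (0:ℝ) < Cc.ncard := by
          exact_mod_cast (Set.ncard_pos (Set.toFinite _)).mpr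
            (Set.nonempty_iff_ne_empty.mpr hCne)
        have hCss : Cc ⊂ S := by
          constructor
          · exact Set.diff_subset
          · intro hsub
            exact (hsub hv).2 (hvAk k)
        have hCagree : ∀ u ∉ Cc, ℓC u = ℓ u := by
          intro u hu
          simp only [hℓC_def]
          rw [if_neg hu]
        have hnot : ¬ (β < IR Ψ Cc ℓ ℓC) := fun hlt =>
          hmin ⟨Cc, ℓC, hCss, hCagree, himpC, hlt⟩
        push_neg at hnot
        rwa [IR, if_neg hCne, div_le_iff₀ hCcard] at hnot
      · push_neg at himpC
        have h0 : (0:ℝ) ≤ β * Cc.ncard := mul_nonneg hβpos.le (Nat.cast_nonneg _)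
        linarith
    -- pointwise inequality
    have hpt : ∀ w, (Ψ w ℓ - Ψ w ℓS) ≤
        (Ψ w ℓ - Ψ w ℓA) + (Ψ w ℓ - Ψ w ℓC) + 3*Λ*(if w ∈ T then (1:ℝ) else 0) := by
      intro w
      by_cases hw : w ∈ T
      · rw [if_pos hw]
        obtain ⟨h1, h2⟩ := hbnd w ℓ
        obtain ⟨h3, h4⟩ := hbnd w ℓS
        obtain ⟨h5, h6⟩ := hbnd w ℓA
        obtain ⟨h7, h8⟩ := hbnd w ℓC
        linarith
      · rw [if_neg hw]
        rw [hT_def, Set.mem_setOf_eq] at hw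
        by_cases hP : ∃ u1, withinDist G r w u1 ∧ u1 ∈ S ∧ u1 ∉ A
        · have hnQ : ∀ u2, withinDist G r w u2 → u2 ∉ A := by
            intro u2 h2 hA2
            exact hw ⟨hP, u2, h2, hA2⟩
          have h1 : Ψ w ℓA = Ψ w ℓ := by
            apply hloc
            intro u hu
            simp only [hℓA_def]
            exact if_neg (hnQ u hu)
          have h2 : Ψ w ℓC = Ψ w ℓS := by
            apply hloc
            intro u hu
            simp only [hℓC_def]
            by_cases huC : u ∈ Cc
            · rw [if_pos huC]
            · rw [if_neg huC]
              have huS : u ∉ S := by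
                intro huS
                exact huC ⟨huS, hnQ u hu⟩
              exact (hout u huS).symm
          rw [h1, h2]
          ring_nf
          linarith
        · push_neg at hP
          have h1 : Ψ w ℓA = Ψ w ℓS := by
            apply hloc
            intro u hu
            simp only [hℓA_def]
            by_cases huA : u ∈ A
            · rw [if_pos huA]
            · rw [if_neg huA]
              have huS : u ∉ S := fun huS => huA (hP u hu huS)
              exact (hout u huS).symm
          have h2 : Ψ w ℓC = Ψ w ℓ := by
            apply hloc
            intro u hu
            simp only [hℓC_def]
            refine if_neg ?_
            intro huC
            exact huC.2 (hP u hu huC.1)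
          rw [h1, h2]
          ring_nf
          linarith
    -- sum it up
    have hind : ∑ w, (if w ∈ T then (1:ℝ) else 0) = (T.ncard : ℝ) := by
      have hfil : (Finset.univ.filter (fun w => w ∈ T)).card = T.ncard := by
        rw [Set.ncard_eq_toFinset_card']
        congr 1
        ext u
        simp
      rw [Finset.sum_boole, hfil]
    have hkey : β * (S.ncard : ℝ) ≤
        ((∑ w, Ψ w ℓ) - ∑ w, Ψ w ℓA) + ((∑ w, Ψ w ℓ) - ∑ w, Ψ w ℓC)
          + 3*Λ*(T.ncard : ℝ) := by
      have hs := Finset.sum_le_sum (fun w (_ : w ∈ (Finset.univ : Finset V)) => hpt w)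
      rw [Finset.sum_sub_distrib, Finset.sum_add_distrib, Finset.sum_add_distrib,
        Finset.sum_sub_distrib, Finset.sum_sub_distrib, ← Finset.mul_sum, hind] at hs
      rw [← hsumS]
      exact hs
    -- counting T
    have hTsub : T ⊆ ⋃ u1 ∈ (Ak (k+2*r) \ A), {w | withinDist G r u1 w} := by
      rintro w ⟨⟨u1, h1, h1S, h1A⟩, ⟨u2, h2, h2A⟩⟩
      refine Set.mem_biUnion ?_ (withinDist_symm h1)
      refine ⟨⟨h1S, ?_⟩, h1A⟩
      have d1 : withinDist G r u1 w := withinDist_symm h1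
      have d2 : withinDist G k u2 v := h2A.2
      have d3 := withinDist_trans (withinDist_trans d1 h2) d2
      exact withinDist_mono (by omega) d3
    have hgg : ((A.ncard : ℝ)) ≤ ((Ak (k+2*r)).ncard : ℝ) := by
      exact_mod_cast Set.ncard_le_ncard (hAkmono (by omega)) (Set.toFinite _)
    have hTcard : (T.ncard : ℝ) ≤ (((Ak (k+2*r)).ncard : ℝ) - (A.ncard : ℝ)) * K := by
      have hc1 : T.ncard ≤ (Ak (k+2*r) \ A).ncard * ((Δ+1)^r) := by
        refine le_trans (Set.ncard_le_ncard hTsub (Set.toFinite _)) ?_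
        exact set_biUnion_ncard _ _ _ (fun u1 => ball_card hdeg u1 r)
      have hdiff : (Ak (k+2*r) \ A).ncard + A.ncard = (Ak (k+2*r)).ncard :=
        Set.ncard_diff_add_ncard_of_subset (hAkmono (by omega)) (Set.toFinite _)
      have hdiffR : ((Ak (k+2*r) \ A).ncard : ℝ)
          = ((Ak (k+2*r)).ncard : ℝ) - (A.ncard : ℝ) := by
        have := congrArg (fun n : ℕ => (n : ℝ)) hdiff
        push_cast at this
        linarith
      calc (T.ncard : ℝ) ≤ ((Ak (k+2*r) \ A).ncard : ℝ) * (((Δ+1)^r : ℕ) : ℝ) := by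
            exact_mod_cast hc1
        _ = (((Ak (k+2*r)).ncard : ℝ) - (A.ncard : ℝ)) * K := by
            rw [hdiffR, hK_def]
            push_cast
            ring
    -- combine everything
    have hSC : (S.ncard : ℝ) = (A.ncard : ℝ) + (Cc.ncard : ℝ) := by
      have h := Set.ncard_diff_add_ncard_of_subset hAsub (Set.toFinite S)
      have := congrArg (fun n : ℕ => (n : ℝ)) h
      push_cast at this
      rw [hC_def]
      linarith
    have hβS : β * (S.ncard:ℝ) = β*(A.ncard:ℝ) + β*(Cc.ncard:ℝ) := by
      rw [hSC]
      ring
    have hexp : (β-ε)*(A.ncard:ℝ) = β*(A.ncard:ℝ) - ε*(A.ncard:ℝ) := by ring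
    have hfin : ε * (A.ncard:ℝ) ≤ 3*Λ*(T.ncard:ℝ) := by
      linarith [hkey, hImpA, hImpC, hβS, hexp]
    have h3Λ : (0:ℝ) ≤ 3*Λ := by linarith
    calc ε * ((A.ncard : ℝ)) ≤ 3*Λ*(T.ncard:ℝ) := hfin
      _ ≤ 3*Λ*((((Ak (k+2*r)).ncard : ℝ) - (A.ncard : ℝ)) * K) :=
          mul_le_mul_of_nonneg_left hTcard h3Λ
      _ = (3*Λ*K)*(((Ak (k+2*r)).ncard : ℝ) - (A.ncard : ℝ)) := by ring
      _ ≤ D*(((Ak (k+2*r)).ncard : ℝ) - (A.ncard : ℝ)) :=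
          mul_le_mul_of_nonneg_right hDΛK (by linarith)
  -- growth iteration
  set c : ℝ := ε / D with hc_def
  have hc0 : 0 < c := div_pos hε hD0
  have hc1 : c ≤ 1 := by
    rw [div_le_one hD0]; linarith
  have hg1 : ∀ i : ℕ, (1:ℝ) ≤ (Ak (2*r*i)).ncard := by
    intro i
    exact_mod_cast (Set.ncard_pos (Set.toFinite _)).mpr ⟨v, hvAk _⟩
  have hgn : ∀ i : ℕ, ((Ak (2*r*i)).ncard : ℝ) ≤ Fintype.card V := by
    intro i
    have h1 : (Ak (2*r*i)).ncard ≤ (Set.univ : Set V).ncard :=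
      Set.ncard_le_ncard (Set.subset_univ _) (Set.toFinite _)
    rw [Set.ncard_univ, Nat.card_eq_fintype_card] at h1
    exact_mod_cast h1
  have hgrow : ∀ m : ℕ, (∀ i < m, ¬ good (2*r*i)) →
      (1 + c)^m ≤ ((Ak (2*r*m)).ncard : ℝ) := by
    intro m
    induction m with
    | zero => intro _; simpa using hg1 0
    | succ m ih =>
      intro hfail
      have h1 : (1 + c)^m ≤ ((Ak (2*r*m)).ncard : ℝ) :=
        ih fun i hi => hfail i (by omega)
      have h2 := hstep (2*r*m) (hfail m (by omega))
      rw [show 2*r*m + 2*r = 2*r*(m+1) by ring] at h2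
      have h3 : c * ((Ak (2*r*m)).ncard : ℝ) ≤
          ((Ak (2*r*(m+1))).ncard : ℝ) - ((Ak (2*r*m)).ncard : ℝ) := by
        rw [hc_def, div_mul_eq_mul_div, div_le_iff₀ hD0, mul_comm _ D]
        exact h2
      calc (1 + c)^(m+1) = (1 + c)^m * (1 + c) := by ring
        _ ≤ ((Ak (2*r*m)).ncard : ℝ) * (1 + c) := by
            apply mul_le_mul_of_nonneg_right h1; linarith
        _ = ((Ak (2*r*m)).ncard : ℝ) + c * ((Ak (2*r*m)).ncard : ℝ) := by ring
        _ ≤ ((Ak (2*r*(m+1))).ncard : ℝ) := by linarith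
  -- find a good index
  have hlogn : 0 < Real.log (Fintype.card V) :=
    Real.log_pos (by exact_mod_cast (show (1:ℕ) < Fintype.card V by omega))
  have hlogc : c / 2 ≤ Real.log (1 + c) := half_le_log_one_add hc0 hc1
  set M : ℕ := Nat.ceil (2 * Real.log (Fintype.card V) / c) with hM_def
  have hgoodM : ∃ i, i ≤ M ∧ good (2*r*i) := by
    by_contra hcon
    push_neg at hcon
    have hfail : ∀ i < M + 1, ¬ good (2*r*i) := fun i hi => hcon i (by omega)
    have h1 : (1 + c)^(M+1) ≤ (Fintype.card V : ℝ) :=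
      (hgrow (M+1) hfail).trans (hgn (M+1))
    have h2 : (M+1 : ℝ) * Real.log (1 + c) ≤ Real.log (Fintype.card V) := by
      have := Real.log_le_log (by positivity) h1
      rwa [Real.log_pow, Nat.cast_add, Nat.cast_one] at this
    have h3 : (M+1 : ℝ) * (c/2) ≤ Real.log (Fintype.card V) := by
      calc (M+1 : ℝ) * (c/2) ≤ (M+1 : ℝ) * Real.log (1 + c) := by
            apply mul_le_mul_of_nonneg_left hlogc; positivity
        _ ≤ _ := h2
    have h4 : (M:ℝ) + 1 ≤ 2 * Real.log (Fintype.card V) / c := by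
      rw [le_div_iff₀ hc0]; linarith
    have h5 : 2 * Real.log (Fintype.card V) / c ≤ M := Nat.le_ceil _
    linarith
  obtain ⟨i, hiM, hgi⟩ := hgoodM
  have hgi' : β - ε ≤ IR Ψ (Ak (2*r*i)) ℓ
      (fun u => @ite L (u ∈ Ak (2*r*i)) (Classical.propDecidable _) (ℓS u) (ℓ u)) := by
    simpa only [hgood_def] using hgi
  refine ⟨2*r*i, ?_, Ak (2*r*i), ⟨v, hvAk _⟩, subset_rfl, hgi'⟩
  -- numeric bound on k
  have hM2 : (M:ℝ) ≤ 2 * Real.log (Fintype.card V) / c + 1 := by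
    have := Nat.ceil_lt_add_one (show (0:ℝ) ≤ 2 * Real.log (Fintype.card V) / c by positivity)
    exact le_of_lt this
  have hrR : (1:ℝ) ≤ (r:ℝ) := Nat.one_le_cast.mpr hr
  have hlog2 : 0 < Real.log 2 := Real.log_pos (by norm_num)
  have hlog2n : Real.log 2 ≤ Real.log (Fintype.card V) := by
    apply Real.log_le_log (by norm_num)
    exact_mod_cast hn
  have hcalc : ((2*r*i : ℕ) : ℝ) ≤ 2*(r:ℝ)*M := by
    push_cast
    have : (i:ℝ) ≤ M := Nat.cast_le.mpr hiM
    nlinarith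
  have h2c : 2 * Real.log (Fintype.card V) / c = 2 * D * Real.log (Fintype.card V) / ε := by
    rw [hc_def]; field_simp
  calc ((2*r*i : ℕ) : ℝ) ≤ 2*(r:ℝ)*M := hcalc
    _ ≤ 2*(r:ℝ) * (2 * D * Real.log (Fintype.card V) / ε + 1) := by
        rw [← h2c]; apply mul_le_mul_of_nonneg_left (by linarith) (by linarith)
    _ = 4*(r:ℝ)*D * Real.log (Fintype.card V) / ε + 2*r := by ring
    _ ≤ (4 * r * D + 2 * r / Real.log 2 + 1) * Real.log (Fintype.card V) / ε := by
        have h1 : 2*(r:ℝ) ≤ (2 * r / Real.log 2) * Real.log (Fintype.card V) / ε := by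
          have hq : (1:ℝ) ≤ Real.log (Fintype.card V) / (Real.log 2 * ε) := by
            rw [le_div_iff₀ (by positivity)]
            nlinarith [hlog2n, hlog2, hε1, hε]
          calc 2*(r:ℝ) = 2*r*1 := by ring
            _ ≤ 2*r*(Real.log (Fintype.card V) / (Real.log 2 * ε)) :=
                mul_le_mul_of_nonneg_left hq (by linarith)
            _ = (2 * r / Real.log 2) * Real.log (Fintype.card V) / ε := by
                field_simp
        have h2 : 0 ≤ Real.log (Fintype.card V) / ε := by positivity
        have : (4 * r * D + 2 * r / Real.log 2 + 1) * Real.log (Fintype.card V) / ε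
            = 4*(r:ℝ)*D * Real.log (Fintype.card V) / ε
              + (2 * r / Real.log 2) * Real.log (Fintype.card V) / ε
              + Real.log (Fintype.card V) / ε := by ring
        rw [this]
        linarith
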